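/- The kernel of the extension of D to the localization k[x,s,t,u,v]_x equals the k-subalgebra generated by x, f2/(2x^3), f3/(3x^6), f4/x, and 1/x, where f2 = 2x^3 t − s^2, f3 = 3x^6 u − 3x^3 t s + s^3, f4 = x v − s. -/

import Mathlib

open MvPolynomial

set_option maxHeartbeats 1000000 in
set_option synthInstance.maxHeartbeats 400000 in

theorem daigle_freudenburg_localized_kernel
    (K : Type*) [Field K] [CharZero K]
    (D : Derivation K (MvPolynomial (Fin 5) K) (MvPolynomial (Fin 5) K))
    (hx : D (X 0) = 0) (hs : D (X 1) = X 0 ^ 3) (ht : D (X 2) = X 1)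
    (hu : D (X 3) = X 2) (hv : D (X 4) = X 0 ^ 2)
    (D' : Derivation K (Localization.Away (X 0 : MvPolynomial (Fin 5) K))
        (Localization.Away (X 0 : MvPolynomial (Fin 5) K)))
    (hext : ∀ f : MvPolynomial (Fin 5) K,
        D' (algebraMap (MvPolynomial (Fin 5) K) _ f)
          = algebraMap (MvPolynomial (Fin 5) K) _ (D f))
    (ix : Localization.Away (X 0 : MvPolynomial (Fin 5) K))
    (hix : ix * algebraMap (MvPolynomial (Fin 5) K) _ (X 0) = 1)
    (f₂ f₃ f₄ : MvPolynomial (Fin 5) K)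
    (hf₂ : f₂ = 2 * X 0 ^ 3 * X 2 - X 1 ^ 2)
    (hf₃ : f₃ = 3 * X 0 ^ 6 * X 3 - 3 * X 0 ^ 3 * X 2 * X 1 + X 1 ^ 3)
    (hf₄ : f₄ = X 0 * X 4 - X 1) :
    ∀ a : Localization.Away (X 0 : MvPolynomial (Fin 5) K),
      D' a = 0 ↔
        a ∈ Algebra.adjoin K
          ({algebraMap (MvPolynomial (Fin 5) K) _ (X 0),
            algebraMap (MvPolynomial (Fin 5) K) _ (C (2⁻¹ : K) * f₂) * ix ^ 3,
            algebraMap (MvPolynomial (Fin 5) K) _ (C (3⁻¹ : K) * f₃) * ix ^ 6,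
            algebraMap (MvPolynomial (Fin 5) K) _ f₄ * ix,
            ix} : Set (Localization.Away (X 0 : MvPolynomial (Fin 5) K))) := by
  intro a
  set φ := algebraMap (MvPolynomial (Fin 5) K)
    (Localization.Away (X 0 : MvPolynomial (Fin 5) K)) with hφ
  -- derivation of the distinguished polynomials vanishes
  have hDC : ∀ k : K, D (C k) = 0 := fun k => by
    rw [← MvPolynomial.algebraMap_eq]; exact D.map_algebraMap k
  have hD2 : D (2 : MvPolynomial (Fin 5) K) = 0 := by
    have := D.map_natCast (R := K) 2; norm_num at this; exact this
  have hD3 : D (3 : MvPolynomial (Fin 5) K) = 0 := by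
    have := D.map_natCast (R := K) 3; norm_num at this; exact this
  have hDf₂ : D (C (2⁻¹ : K) * f₂) = 0 := by
    rw [hf₂]
    simp only [map_sub, Derivation.leibniz, Derivation.leibniz_pow, hx, hs, ht, hDC, hD2,
      smul_eq_mul, nsmul_eq_mul, smul_zero, mul_zero, zero_mul, add_zero, zero_add, smul_smul]
    ring
  have hDf₃ : D (C (3⁻¹ : K) * f₃) = 0 := by
    rw [hf₃]
    simp only [map_add, map_sub, Derivation.leibniz, Derivation.leibniz_pow, hx, hs, ht, hu, hDC,
      hD3, smul_eq_mul, nsmul_eq_mul, smul_zero, mul_zero, zero_mul, add_zero, zero_add, smul_smul]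
    ring
  have hDf₄ : D f₄ = 0 := by
    rw [hf₄]
    simp only [map_sub, Derivation.leibniz, hx, hs, hv, smul_eq_mul, smul_zero, mul_zero,
      zero_mul, add_zero, zero_add]
    ring
  -- abbreviations in A
  set x' := φ (X 0) with hx'
  set s' := φ (X 1) with hs'
  set g₂ := φ (C (2⁻¹ : K) * f₂) * ix ^ 3 with hg₂
  set g₃ := φ (C (3⁻¹ : K) * f₃) * ix ^ 6 with hg₃
  set g₄ := φ f₄ * ix with hg₄
  have hxi : x' * ix = 1 := by rw [mul_comm]; exact hix
  have hD'x : D' x' = 0 := by rw [hext, hx, map_zero]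
  have hD's : D' s' = x' ^ 3 := by rw [hext, hs, map_pow]
  have hD'ix : D' ix = 0 := by
    have h0 : D' (ix * x') = 0 := by rw [hix]; exact D'.map_one_eq_zero
    rw [Derivation.leibniz, hD'x, smul_zero, zero_add, smul_eq_mul] at h0
    calc D' ix = (ix * x') * D' ix := by rw [hix, one_mul]
      _ = ix * (x' * D' ix) := by ring
      _ = 0 := by rw [h0, mul_zero]
  have hD'ixpow : ∀ n : ℕ, D' (ix ^ n) = 0 := fun n => by
    simp [Derivation.leibniz_pow, hD'ix]
  -- everything in the adjoined algebra is killed by D'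
  set S := Algebra.adjoin K ({x', g₂, g₃, g₄, ix} : Set (Localization.Away (X 0 : MvPolynomial (Fin 5) K))) with hSdef
  have hker : ∀ b ∈ S, D' b = 0 := by
    intro b hb
    induction hb using Algebra.adjoin_induction with
    | mem z hz =>
      simp only [Set.mem_insert_iff, Set.mem_singleton_iff] at hz
      rcases hz with rfl | rfl | rfl | rfl | rfl
      · exact hD'x
      · rw [hg₂, Derivation.leibniz, hD'ixpow, hext, hDf₂, map_zero, smul_zero, smul_zero,
          add_zero]
      · rw [hg₃, Derivation.leibniz, hD'ixpow, hext, hDf₃, map_zero, smul_zero, smul_zero,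
          add_zero]
      · rw [hg₄, Derivation.leibniz, hD'ix, hext, hDf₄, map_zero, smul_zero, smul_zero, add_zero]
      · exact hD'ix
    | algebraMap r => exact D'.map_algebraMap r
    | add u v hu' hv' hdu hdv => rw [map_add, hdu, hdv, add_zero]
    | mul u v hu' hv' hdu hdv => rw [Derivation.leibniz, hdu, hdv, smul_zero, smul_zero, add_zero]
  have hxS : x' ∈ S := Algebra.subset_adjoin (by simp)
  have hixS : ix ∈ S := Algebra.subset_adjoin (by simp)
  have hg₂S : g₂ ∈ S := Algebra.subset_adjoin (by simp)
  have hg₃S : g₃ ∈ S := Algebra.subset_adjoin (by simp)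
  have hg₄S : g₄ ∈ S := Algebra.subset_adjoin (by simp)
  clear_value S
  -- cancellation helpers
  have hcanc : ∀ (n : ℕ) (z : Localization.Away (X 0 : MvPolynomial (Fin 5) K)), x' ^ n * z = 0 → z = 0 := by
    intro n z hz
    calc z = (ix ^ n * x' ^ n) * z := by
            rw [← mul_pow, mul_comm ix x', hxi, one_pow, one_mul]
      _ = ix ^ n * (x' ^ n * z) := by ring
      _ = 0 := by rw [hz, mul_zero]
  have hnat : ∀ (j : ℕ) (y : Localization.Away (X 0 : MvPolynomial (Fin 5) K)), 0 < j → (j : Localization.Away (X 0 : MvPolynomial (Fin 5) K)) * y = 0 → y = 0 := by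
    intro j y hj hy
    have hcast : (j : Localization.Away (X 0 : MvPolynomial (Fin 5) K)) = algebraMap K (Localization.Away (X 0 : MvPolynomial (Fin 5) K)) (j : K) := (map_natCast (algebraMap K (Localization.Away (X 0 : MvPolynomial (Fin 5) K))) j).symm
    have hjK : ((j : K)) ≠ 0 := Nat.cast_ne_zero.mpr hj.ne'
    calc y = (algebraMap K (Localization.Away (X 0 : MvPolynomial (Fin 5) K)) (j : K)⁻¹
          * algebraMap K (Localization.Away (X 0 : MvPolynomial (Fin 5) K)) (j : K)) * y := by
            rw [← map_mul, inv_mul_cancel₀ hjK, map_one, one_mul]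
      _ = algebraMap K (Localization.Away (X 0 : MvPolynomial (Fin 5) K)) (j : K)⁻¹
          * ((j : Localization.Away (X 0 : MvPolynomial (Fin 5) K)) * y) := by rw [hcast]; ring
      _ = 0 := by rw [hy, mul_zero]
  -- derivative of a polynomial expression in s'
  have hDsum : ∀ (n : ℕ) (c : ℕ → Localization.Away (X 0 : MvPolynomial (Fin 5) K)), (∀ i, D' (c i) = 0) →
      D' (∑ i ∈ Finset.range n, c i * s' ^ i)
        = x' ^ 3 * ∑ i ∈ Finset.range n, (i : Localization.Away (X 0 : MvPolynomial (Fin 5) K)) * c i * s' ^ (i - 1) := by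
    intro n c hc
    rw [map_sum, Finset.mul_sum]
    refine Finset.sum_congr rfl fun i _ => ?_
    rw [Derivation.leibniz, hc i, smul_zero, add_zero, Derivation.leibniz_pow, hD's]
    simp only [smul_eq_mul, nsmul_eq_mul]
    ring
  -- linear independence of powers of s' over the kernel
  have hnil : ∀ (n : ℕ) (c : ℕ → Localization.Away (X 0 : MvPolynomial (Fin 5) K)), (∀ i, D' (c i) = 0) →
      (∑ i ∈ Finset.range n, c i * s' ^ i) = 0 → ∀ i < n, c i = 0 := by
    intro n
    induction n with
    | zero => exact fun c _ _ i hi => absurd hi (Nat.not_lt_zero i)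
    | succ m IH =>
      intro c hc hsum i hi
      have h1 : x' ^ 3 * ∑ i ∈ Finset.range (m + 1), (i : Localization.Away (X 0 : MvPolynomial (Fin 5) K)) * c i * s' ^ (i - 1) = 0 := by
        rw [← hDsum _ c hc, hsum, map_zero]
      have h2 := hcanc 3 _ h1
      rw [Finset.sum_range_succ'] at h2
      simp only [Nat.cast_zero, zero_mul, add_zero, Nat.add_sub_cancel] at h2
      have hd : ∀ j, D' ((((j : ℕ) + 1 : ℕ) : Localization.Away (X 0 : MvPolynomial (Fin 5) K)) * c (j + 1)) = 0 := by
        intro j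
        rw [Derivation.leibniz, hc, Derivation.map_natCast, smul_zero, smul_zero, add_zero]
      have hz := IH (fun j => (((j : ℕ) + 1 : ℕ) : Localization.Away (X 0 : MvPolynomial (Fin 5) K)) * c (j + 1)) hd h2
      have hcpos : ∀ j < m, c (j + 1) = 0 := fun j hj =>
        hnat (j + 1) _ (Nat.succ_pos j) (hz j hj)
      rcases Nat.eq_zero_or_pos i with rfl | hipos
      · rw [Finset.sum_range_succ'] at hsum
        have : ∀ j ∈ Finset.range m, c (j + 1) * s' ^ (j + 1) = 0 := fun j hj => by
          rw [hcpos j (Finset.mem_range.mp hj), zero_mul]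
        rw [Finset.sum_congr rfl this, Finset.sum_const_zero, zero_add, pow_zero, mul_one]
          at hsum
        exact hsum
      · obtain ⟨j, rfl⟩ := Nat.exists_eq_add_of_lt hipos
        simp only [zero_add, Nat.add_comm 1 j] at *
        exact hcpos j (by omega)
  -- the subalgebra over S generated by s'
  set W := Algebra.adjoin (↥S) ({s'} : Set (Localization.Away (X 0 : MvPolynomial (Fin 5) K))) with hWdef
  have hSW : ∀ b ∈ S, b ∈ W := by
    intro b hb
    exact W.algebraMap_mem (⟨b, hb⟩ : S)
  have hs'W : s' ∈ W := Algebra.subset_adjoin rfl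
  have hxW : x' ∈ W := hSW _ hxS
  have hixW : ix ∈ W := hSW _ hixS
  have hKW : ∀ k : K, algebraMap K (Localization.Away (X 0 : MvPolynomial (Fin 5) K)) k ∈ W := fun k => hSW _ (S.algebraMap_mem k)
  have hCW : ∀ k : K, φ (C k) ∈ W := fun k => by
    rw [hφ, ← MvPolynomial.algebraMap_eq, ← IsScalarTower.algebraMap_apply]
    exact hKW k
  -- recovering φ of a polynomial from g's : multiply back by powers of x'
  have hinv : ∀ (n : ℕ) (b : Localization.Away (X 0 : MvPolynomial (Fin 5) K)), b = ix ^ n * (x' ^ n * b) := by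
    intro n b
    rw [← mul_assoc, ← mul_pow, mul_comm ix x', hxi, one_pow, one_mul]
  -- the five variables are in W
  have h2A : φ (C (2⁻¹ : K)) * 2 = 1 := by
    rw [← map_ofNat φ 2, ← map_ofNat (C : K →+* MvPolynomial (Fin 5) K) 2, ← map_mul, ← C_mul]
    norm_num
  have h3A : φ (C (3⁻¹ : K)) * 3 = 1 := by
    rw [← map_ofNat φ 3, ← map_ofNat (C : K →+* MvPolynomial (Fin 5) K) 3, ← map_mul, ← C_mul]
    norm_num
  have hT : x' ^ 3 * φ (X 2) = φ (C (2⁻¹ : K) * f₂) + φ (C (2⁻¹ : K)) * s' ^ 2 := by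
    rw [hf₂]
    simp only [map_mul, map_sub, map_pow, map_ofNat]
    linear_combination (-(φ (X 0 : MvPolynomial (Fin 5) K)) ^ 3 * φ (X 2 : MvPolynomial (Fin 5) K)) * h2A
  have htW : φ (X 2) ∈ W := by
    rw [hinv 3 (φ (X 2)), hT]
    have hφf₂ : φ (C (2⁻¹ : K) * f₂) ∈ W := by
      have e : φ (C (2⁻¹ : K) * f₂) = g₂ * x' ^ 3 := by
        rw [hg₂, mul_assoc, ← mul_pow, hix, one_pow, mul_one]
      rw [e]; exact mul_mem (hSW _ hg₂S) (pow_mem hxW 3)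
    exact mul_mem (pow_mem hixW 3) (add_mem hφf₂ (mul_mem (hCW _) (pow_mem hs'W 2)))
  have hnegC : φ (C (-(3⁻¹ : K))) = -φ (C (3⁻¹ : K)) := by
    rw [show C (-(3⁻¹ : K)) = -C (3⁻¹ : K) from map_neg (C : K →+* MvPolynomial (Fin 5) K) _,
      map_neg]
  have hU : x' ^ 6 * φ (X 3)
      = φ (C (3⁻¹ : K) * f₃) + x' ^ 3 * φ (X 2) * s' + φ (C (-(3⁻¹ : K))) * s' ^ 3 := by
    rw [hf₃, hnegC]
    simp only [map_mul, map_add, map_sub, map_pow, map_ofNat]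
    linear_combination (φ (X 0 : MvPolynomial (Fin 5) K) ^ 3 * φ (X 2 : MvPolynomial (Fin 5) K) * φ (X 1 : MvPolynomial (Fin 5) K)
      - φ (X 0 : MvPolynomial (Fin 5) K) ^ 6 * φ (X 3 : MvPolynomial (Fin 5) K)) * h3A
  have huW : φ (X 3) ∈ W := by
    rw [hinv 6 (φ (X 3)), hU]
    have hφf₃ : φ (C (3⁻¹ : K) * f₃) ∈ W := by
      have e : φ (C (3⁻¹ : K) * f₃) = g₃ * x' ^ 6 := by
        rw [hg₃, mul_assoc, ← mul_pow, hix, one_pow, mul_one]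
      rw [e]; exact mul_mem (hSW _ hg₃S) (pow_mem hxW 6)
    refine mul_mem (pow_mem hixW 6) (add_mem (add_mem hφf₃ ?_) ?_)
    · exact mul_mem (mul_mem (pow_mem hxW 3) htW) hs'W
    · exact mul_mem (hCW _) (pow_mem hs'W 3)
  have hV : x' ^ 1 * φ (X 4) = φ f₄ + s' := by
    rw [hf₄]
    simp only [map_mul, map_sub]
    ring
  have hvW : φ (X 4) ∈ W := by
    rw [hinv 1 (φ (X 4)), hV]
    have hφf₄ : φ f₄ ∈ W := by
      have e : φ f₄ = g₄ * x' := by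
        rw [hg₄, mul_assoc, hix, mul_one]
      rw [e]; exact mul_mem (hSW _ hg₄S) hxW
    exact mul_mem (pow_mem hixW 1) (add_mem hφf₄ hs'W)
  have hXW : ∀ i : Fin 5, φ (X i) ∈ W := by
    intro i
    fin_cases i
    · exact hxW
    · exact hs'W
    · exact htW
    · exact huW
    · exact hvW
  have hpoly : ∀ p : MvPolynomial (Fin 5) K, φ p ∈ W := by
    intro p
    induction p using MvPolynomial.induction_on with
    | C k => exact hCW k
    | add p q hp hq => rw [map_add]; exact add_mem hp hq
    | mul_X p i hp => rw [map_mul]; exact mul_mem hp (hXW i)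
  have hWtop : ∀ b : Localization.Away (X 0 : MvPolynomial (Fin 5) K), b ∈ W := by
    intro b
    obtain ⟨⟨p, m⟩, hm⟩ := IsLocalization.surj (Submonoid.powers (X 0 : MvPolynomial (Fin 5) K)) b
    obtain ⟨n, hn⟩ := m.2
    have hn' : (X 0 : MvPolynomial (Fin 5) K) ^ n = (m : MvPolynomial (Fin 5) K) := hn
    have hb : b * x' ^ n = φ p := by
      rw [hx', ← map_pow, hn']; exact hm
    have : b = φ p * ix ^ n := by
      calc b = b * (x' * ix) ^ n := by rw [hxi, one_pow, mul_one]
        _ = (b * x' ^ n) * ix ^ n := by rw [mul_pow]; ring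
        _ = φ p * ix ^ n := by rw [hb]
    rw [this]
    exact mul_mem (hpoly p) (pow_mem hixW n)
  -- main equivalence
  constructor
  · intro hDa
    have hWa := hWtop a
    rw [hWdef, Algebra.adjoin_singleton_eq_range_aeval] at hWa
    obtain ⟨p, hp⟩ := hWa
    set N := p.natDegree with hN
    set c : ℕ → Localization.Away (X 0 : MvPolynomial (Fin 5) K) := fun i => ((p.coeff i : Localization.Away (X 0 : MvPolynomial (Fin 5) K))) with hc
    have hrep : a = ∑ i ∈ Finset.range (N + 1), c i * s' ^ i := by
      have e := Polynomial.aeval_eq_sum_range (R := ↥S) (p := p) s'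
      have hp' : (Polynomial.aeval s') p = a := hp
      rw [hp'] at e
      rw [e]
      refine Finset.sum_congr rfl fun i _ => ?_
      rw [Algebra.smul_def]
      rfl
    have hcker : ∀ i, D' (c i) = 0 := fun i => hker _ (p.coeff i).2
    have h1 : x' ^ 3 * ∑ i ∈ Finset.range (N + 1), (i : Localization.Away (X 0 : MvPolynomial (Fin 5) K)) * c i * s' ^ (i - 1) = 0 := by
      rw [← hDsum _ c hcker, ← hrep, hDa]
    have h2 := hcanc 3 _ h1
    rw [Finset.sum_range_succ'] at h2
    simp only [Nat.cast_zero, zero_mul, add_zero, Nat.add_sub_cancel] at h2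
    have hd : ∀ j, D' ((((j : ℕ) + 1 : ℕ) : Localization.Away (X 0 : MvPolynomial (Fin 5) K)) * c (j + 1)) = 0 := by
      intro j
      rw [Derivation.leibniz, hcker, Derivation.map_natCast, smul_zero, smul_zero, add_zero]
    have hz := hnil N (fun j => (((j : ℕ) + 1 : ℕ) : Localization.Away (X 0 : MvPolynomial (Fin 5) K)) * c (j + 1)) hd h2
    have hcpos : ∀ j < N, c (j + 1) = 0 := fun j hj =>
      hnat (j + 1) _ (Nat.succ_pos j) (hz j hj)
    have ha0 : a = c 0 := by
      rw [hrep, Finset.sum_range_succ']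
      have : ∀ j ∈ Finset.range N, c (j + 1) * s' ^ (j + 1) = 0 := fun j hj => by
        rw [hcpos j (Finset.mem_range.mp hj), zero_mul]
      rw [Finset.sum_congr rfl this, Finset.sum_const_zero, zero_add, pow_zero, mul_one]
    rw [ha0]
    exact (p.coeff 0).2
  · exact hker a
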